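/- arXiv:2501.10812 — 2 statements merged into one kernel-verified Lean document; each statement's English description precedes it below -/
import Mathlib

section
/- For a finite undirected graph G, the minimum over all acyclic orientations D of G of the number of vertices on a longest directed path in D equals the chromatic number χ(G). -/
/-- Number of vertices on a longest directed path in `D`. -/
noncomputable def dpathLen {V : Type*} (D : V → V → Prop) : ℕ :=
  sSup {n | ∃ l : List V, l.Chain' D ∧ l.Nodup ∧ l.length = n}

/-- The level of `v`: number of vertices on a longest directed path ending at `v`. -/
noncomputable def dlevel {V : Type*} (D : V → V → Prop) (v : V) : ℕ :=
  sSup {n | ∃ l : List V, l.Chain' D ∧ l.Nodup ∧ l.getLast? = some v ∧ l.length = n}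

/-- A directed graph is acyclic if no vertex reaches itself by a nonempty directed walk. -/
def Acyclic {V : Type*} (D : V → V → Prop) : Prop := ∀ v, ¬ Relation.TransGen D v v

/-- `D` is an orientation of `G`: every directed edge lies on an edge of `G`, and every
edge of `G` is directed in exactly one of its two directions. -/
def IsOrientation {V : Type*} (G : SimpleGraph V) (D : V → V → Prop) : Prop :=
  (∀ i j, D i j → G.Adj i j) ∧ (∀ i j, G.Adj i j → (D i j ↔ ¬ D j i))

/-- The directed coupling graph induced by prioritization `p` on coupling graph `G`. -/
def couplingDAG {V : Type*} (G : SimpleGraph V) (p : V → ℕ) : V → V → Prop :=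
  fun i j => G.Adj i j ∧ p i < p j

/-- `p` is a valid prioritization for `G`: adjacent vertices get distinct priorities. -/
def ValidPrio {V : Type*} (G : SimpleGraph V) (p : V → ℕ) : Prop :=
  ∀ i j, G.Adj i j → p i ≠ p j

section Helpers

variable {V : Type*} {D : V → V → Prop}

lemma pathSet_bdd [Fintype V] (D : V → V → Prop) :
    BddAbove {n | ∃ l : List V, l.Chain' D ∧ l.Nodup ∧ l.length = n} := by
  refine ⟨Fintype.card V, fun n hn => ?_⟩
  obtain ⟨l, _, hnd, rfl⟩ := hn
  exact hnd.length_le_card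

lemma levelSet_bdd [Fintype V] (D : V → V → Prop) (v : V) :
    BddAbove {n | ∃ l : List V, l.Chain' D ∧ l.Nodup ∧ l.getLast? = some v ∧ l.length = n} := by
  refine ⟨Fintype.card V, fun n hn => ?_⟩
  obtain ⟨l, _, hnd, _, rfl⟩ := hn
  exact hnd.length_le_card

lemma levelSet_nonempty (D : V → V → Prop) (v : V) :
    (1 : ℕ) ∈ {n | ∃ l : List V, l.Chain' D ∧ l.Nodup ∧ l.getLast? = some v ∧ l.length = n} :=
  ⟨[v], by simp [List.Chain'], by simp, by simp, rfl⟩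

lemma one_le_dlevel [Fintype V] (D : V → V → Prop) (v : V) : 1 ≤ dlevel D v :=
  le_csSup (levelSet_bdd D v) (levelSet_nonempty D v)

lemma dlevel_le_dpathLen [Fintype V] (D : V → V → Prop) (v : V) :
    dlevel D v ≤ dpathLen D := by
  have hmem := Nat.sSup_mem ⟨1, levelSet_nonempty D v⟩ (levelSet_bdd D v)
  obtain ⟨l, hc, hnd, _, hl⟩ := hmem
  exact le_csSup (pathSet_bdd D) ⟨l, hc, hnd, hl⟩

lemma chain'_reflTransGen :
    ∀ (l : List V) (a b : V), l.Chain' D → l.head? = some a → l.getLast? = some b →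
      Relation.ReflTransGen D a b
  | [], a, b => by simp
  | [x], a, b => by
      intro _ ha hb
      simp only [List.head?_cons, Option.some.injEq] at ha
      simp only [List.getLast?_singleton, Option.some.injEq] at hb
      subst ha; subst hb; exact Relation.ReflTransGen.refl
  | x :: y :: l, a, b => by
      intro hc ha hb
      simp only [List.head?_cons, Option.some.injEq] at ha
      subst ha
      unfold List.Chain' at hc
      rw [List.isChain_cons_cons] at hc
      have hb' : (y :: l).getLast? = some b := by
        rw [← hb]; rfl
      exact Relation.ReflTransGen.head hc.1
        (chain'_reflTransGen (y :: l) y b hc.2 rfl hb')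

lemma mem_chain_reflTransGen {l : List V} (hc : l.Chain' D) {j i : V}
    (hj : j ∈ l) (hi : l.getLast? = some i) : Relation.ReflTransGen D j i := by
  obtain ⟨s, t, rfl⟩ := List.append_of_mem hj
  have h2 : (j :: t).Chain' D := (List.isChain_append.mp hc).2.1
  have hlast : (j :: t).getLast? = some i := by
    rw [← List.getLast?_append_cons s j t]; exact hi
  exact chain'_reflTransGen (j :: t) j i h2 rfl hlast

lemma dlevel_lt [Fintype V] (hA : Acyclic D) {i j : V} (hij : D i j) :
    dlevel D i < dlevel D j := by
  have hmem : dlevel D i ∈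
      {n | ∃ l : List V, l.Chain' D ∧ l.Nodup ∧ l.getLast? = some i ∧ l.length = n} :=
    Nat.sSup_mem ⟨1, levelSet_nonempty D i⟩ (levelSet_bdd D i)
  obtain ⟨l, hc, hnd, hlast, hlen⟩ := hmem
  have hjl : j ∉ l := by
    intro hjmem
    exact hA j (Relation.TransGen.tail' (mem_chain_reflTransGen hc hjmem hlast) hij)
  have hchain : (l ++ [j]).Chain' D := by
    unfold List.Chain'
    rw [List.isChain_append]
    refine ⟨hc, List.isChain_singleton j, fun x hx y hy => ?_⟩
    simp only [List.head?_cons, Option.mem_def, Option.some.injEq] at hy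
    rw [hlast] at hx
    simp only [Option.mem_def, Option.some.injEq] at hx
    subst hx; subst hy; exact hij
  have hnodup : (l ++ [j]).Nodup := by
    rw [List.nodup_append]
    exact ⟨hnd, List.nodup_singleton j, fun a ha b haj hab => hjl ((List.mem_singleton.mp haj) ▸ hab ▸ ha)⟩
  have hmem2 : dlevel D i + 1 ∈
      {n | ∃ l : List V, l.Chain' D ∧ l.Nodup ∧ l.getLast? = some j ∧ l.length = n} := by
    refine ⟨l ++ [j], hchain, hnodup, ?_, by simp [hlen]⟩
    simp [List.getLast?_append_of_ne_nil]
  have hle : dlevel D i + 1 ≤ dlevel D j := le_csSup (levelSet_bdd D j) hmem2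
  omega

lemma couplingDAG_acyclic (G : SimpleGraph V) (p : V → ℕ) :
    Acyclic (couplingDAG G p) := by
  intro v hv
  have key : ∀ a b, Relation.TransGen (couplingDAG G p) a b → p a < p b := by
    intro a b h
    induction h with
    | single h => exact h.2
    | tail _ h ih => exact ih.trans h.2
  exact absurd (key v v hv) (lt_irrefl _)

lemma couplingDAG_orientation (G : SimpleGraph V) (p : V → ℕ) (hp : ValidPrio G p) :
    IsOrientation G (couplingDAG G p) := by
  constructor
  · exact fun i j h => h.1
  · intro i j hadj
    have hne := hp i j hadj
    constructor
    · rintro ⟨_, h⟩ ⟨_, h'⟩; omega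
    · intro h
      refine ⟨hadj, ?_⟩
      by_contra h'
      exact h ⟨hadj.symm, by omega⟩

lemma couplingDAG_dpathLen_le (G : SimpleGraph V) (p : V → ℕ) {n : ℕ}
    (hn : ∀ v, p v < n) : dpathLen (couplingDAG G p) ≤ n := by
  have h0 : (0 : ℕ) ∈ {n | ∃ l : List V, l.Chain' (couplingDAG G p) ∧ l.Nodup ∧ l.length = n} :=
    ⟨[], by simp [List.Chain'], by simp, rfl⟩
  apply csSup_le ⟨0, h0⟩
  rintro m ⟨l, hc, _, rfl⟩
  have hmap : (l.map p).Chain' (· < ·) := by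
    unfold List.Chain' at hc ⊢
    rw [List.isChain_map]
    exact hc.imp fun a b h => h.2
  have hnd : (l.map p).Nodup :=
    (List.isChain_iff_pairwise.mp hmap).imp fun h => Nat.ne_of_lt h
  have hsub : (l.map p).toFinset ⊆ Finset.range n := by
    intro x hx
    rw [List.mem_toFinset] at hx
    obtain ⟨v, _, rfl⟩ := List.mem_map.mp hx
    exact Finset.mem_range.mpr (hn v)
  calc l.length = (l.map p).length := (List.length_map p).symm
    _ = (l.map p).toFinset.card := (List.toFinset_card_of_nodup hnd).symm
    _ ≤ (Finset.range n).card := Finset.card_le_card hsub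
    _ = n := Finset.card_range n

lemma colorable_of_acyclic [Fintype V] {G : SimpleGraph V} {D : V → V → Prop}
    (hO : IsOrientation G D) (hA : Acyclic D) : G.Colorable (dpathLen D) := by
  refine ⟨SimpleGraph.Coloring.mk
    (fun v => ⟨dlevel D v - 1, ?_⟩) ?_⟩
  · have h1 := one_le_dlevel D v
    have h2 := dlevel_le_dpathLen D v
    omega
  · intro v w hadj
    have hvw : D v w ∨ D w v := by
      have h := hO.2 v w hadj
      by_cases hd : D v w
      · exact Or.inl hd
      · exact Or.inr (not_not.mp fun h' => hd (h.mpr h'))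
    have h1 := one_le_dlevel D v
    have h1' := one_le_dlevel D w
    rcases hvw with h | h
    · have := dlevel_lt hA h
      simp only [ne_eq, Fin.mk.injEq]
      omega
    · have := dlevel_lt hA h
      simp only [ne_eq, Fin.mk.injEq]
      omega

end Helpers

theorem stmt4 {V : Type*} [Fintype V] (G : SimpleGraph V) :
    (↑(sInf {n : ℕ | ∃ D : V → V → Prop,
        IsOrientation G D ∧ Acyclic D ∧ dpathLen D = n}) : ℕ∞) =
      G.chromaticNumber := by
  set S := {n : ℕ | ∃ D : V → V → Prop, IsOrientation G D ∧ Acyclic D ∧ dpathLen D = n}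
  have hχtop : G.chromaticNumber ≠ ⊤ := by
    rw [SimpleGraph.chromaticNumber_ne_top_iff_exists]
    exact ⟨Fintype.card V, G.colorable_of_fintype⟩
  set m := ENat.toNat G.chromaticNumber with hm
  have hχ : G.chromaticNumber = (m : ℕ∞) := (ENat.coe_toNat hχtop).symm
  have hcol : G.Colorable m := G.colorable_chromaticNumber_of_fintype
  -- S is nonempty and sInf S ≤ m : from a coloring with m colors build acyclic orientation
  obtain ⟨c⟩ := hcol
  set p : V → ℕ := fun v => (c v : ℕ) with hp
  have hvalid : ValidPrio G p := by
    intro i j hadj hpe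
    exact c.valid hadj (Fin.ext hpe)
  have hmemS : dpathLen (couplingDAG G p) ∈ S :=
    ⟨couplingDAG G p, couplingDAG_orientation G p hvalid, couplingDAG_acyclic G p, rfl⟩
  have hSne : S.Nonempty := ⟨_, hmemS⟩
  have hub : dpathLen (couplingDAG G p) ≤ m := by
    rcases Nat.eq_zero_or_pos m with hm0 | hm0
    · -- m = 0 : V must be empty
      have : IsEmpty V := by
        rw [hm0] at c
        exact ⟨fun v => (c v).elim0⟩
      have h0 : (0 : ℕ) ∈
          {n | ∃ l : List V, l.Chain' (couplingDAG G p) ∧ l.Nodup ∧ l.length = n} :=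
        ⟨[], by simp [List.Chain'], by simp, rfl⟩
      apply csSup_le ⟨0, h0⟩
      rintro k ⟨l, _, _, rfl⟩
      cases l with
      | nil => simp
      | cons a _ => exact (this.false a).elim
    · exact couplingDAG_dpathLen_le G p fun v => (c v).2
  have h1 : sInf S ≤ m := le_trans (Nat.sInf_le hmemS) hub
  -- other direction: every element of S is ≥ m
  have h2 : m ≤ sInf S := by
    obtain ⟨D, hO, hA, hD⟩ := Nat.sInf_mem hSne
    have := (colorable_of_acyclic hO hA).chromaticNumber_le
    rw [hχ, hD] at this
    exact_mod_cast this
  rw [hχ]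
  exact_mod_cast le_antisymm h1 h2
end

section
/- Let G be a path graph on n ≥ 2 vertices v_1, …, v_n (edges {v_k, v_{k+1}}). The prioritization p(v_k) = k yields a directed coupling graph whose longest directed path has n vertices (n computation levels), while the chromatic-number-minimal prioritization via a proper 2-coloring yields only 2 computation levels. -/
theorem stmt10 (n : ℕ) (hn : 2 ≤ n) :
    dpathLen (couplingDAG (SimpleGraph.pathGraph n) (fun v : Fin n => (v : ℕ))) = n ∧
      ∃ φ : Fin n → ℕ, (∀ v, φ v = 1 ∨ φ v = 2) ∧
        ValidPrio (SimpleGraph.pathGraph n) φ ∧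
        dpathLen (couplingDAG (SimpleGraph.pathGraph n) φ) = 2 := by
  have hbdd : ∀ (p : Fin n → ℕ), BddAbove
      {m | ∃ l : List (Fin n), l.Chain' (couplingDAG (SimpleGraph.pathGraph n) p) ∧
        l.Nodup ∧ l.length = m} := by
    intro p
    refine ⟨n, ?_⟩
    rintro m ⟨l, -, hnd, rfl⟩
    simpa using hnd.length_le_card
  constructor
  · rw [dpathLen]
    apply le_antisymm
    · have h0 : ∃ l : List (Fin n), l.Chain' (couplingDAG (SimpleGraph.pathGraph n)
          (fun v : Fin n => (v : ℕ))) ∧ l.Nodup ∧ l.length = 0 := ⟨[], List.isChain_nil, by simp⟩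
      refine csSup_le ⟨0, h0⟩ ?_
      rintro m ⟨l, -, hnd, rfl⟩
      simpa using hnd.length_le_card
    · apply le_csSup (hbdd _)
      refine ⟨List.finRange n, ?_, List.nodup_finRange n, List.length_finRange⟩
      rw [List.Chain', List.isChain_iff_getElem]
      intro i hi
      simp only [List.getElem_finRange]
      exact ⟨SimpleGraph.pathGraph_adj.mpr (Or.inl (by simp)), by simp⟩
  · refine ⟨fun v => (v : ℕ) % 2 + 1, fun v => by beta_reduce; omega, ?_, ?_⟩
    · intro i j hij h
      simp only at h
      rcases SimpleGraph.pathGraph_adj.mp hij with h1 | h1 <;> omega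
    · rw [dpathLen]
      apply le_antisymm
      · have h0 : ∃ l : List (Fin n), l.Chain' (couplingDAG (SimpleGraph.pathGraph n)
            (fun v : Fin n => (v : ℕ) % 2 + 1)) ∧ l.Nodup ∧ l.length = 0 := ⟨[], List.isChain_nil, by simp⟩
        refine csSup_le ⟨0, h0⟩ ?_
        rintro m ⟨l, hc, -, rfl⟩
        by_contra h
        push_neg at h
        match l, h with
        | a :: b :: c :: t, _ =>
          rw [List.Chain', List.isChain_cons_cons, List.isChain_cons_cons] at hc
          obtain ⟨⟨-, h1⟩, ⟨-, h2⟩, -⟩ := hc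
          simp only at h1 h2
          omega
      · apply le_csSup (hbdd _)
        refine ⟨[⟨0, by omega⟩, ⟨1, by omega⟩], ?_, by simp [Fin.ext_iff], rfl⟩
        simp only [List.Chain', List.isChain_cons_cons, List.isChain_singleton, and_true]
        exact ⟨SimpleGraph.pathGraph_adj.mpr (Or.inl rfl), by simp⟩
end
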